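/- A nonempty set I of incomparable pairs of a finite poset P is reversible if and only if I contains no strict alternating cycle. -/

import Mathlib

section Defs
variable (α : Type*) [PartialOrder α]

/-- `L` is a linear extension of the partial order on `α`. -/
def IsLinExt (L : LinearOrder α) : Prop := ∀ x y : α, x ≤ y → L.le x y

/-- The poset `α` is the intersection of `d` linear extensions. -/
def HasRealizer (d : ℕ) : Prop :=
  ∃ Ls : Fin d → LinearOrder α, (∀ i, IsLinExt α (Ls i)) ∧
    ∀ x y : α, (∀ i, (Ls i).le x y) → x ≤ y

/-- The order dimension of the poset `α`. -/
noncomputable def pdim : ℕ := sInf {d | HasRealizer α d}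

/-- `x` and `y` are incomparable. -/
def IncompP (x y : α) : Prop := ¬ x ≤ y ∧ ¬ y ≤ x

/-- A set of (incomparable) pairs is reversible if some linear extension reverses all pairs. -/
def ReversibleSet (I : Set (α × α)) : Prop :=
  ∃ L : LinearOrder α, IsLinExt α L ∧ ∀ p ∈ I, L.lt p.2 p.1

/-- `I` can be partitioned into `d` reversible sets. -/
def RevPart (I : Set (α × α)) (d : ℕ) : Prop :=
  ∃ J : Fin d → Set (α × α), (⋃ i, J i) = I ∧
    (∀ i j, i ≠ j → Disjoint (J i) (J j)) ∧ ∀ i, ReversibleSet α (J i)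

/-- The least number of reversible sets partitioning `I` (with `revDim ∅ = 1`). -/
noncomputable def revDim (I : Set (α × α)) : ℕ := sInf {d | 0 < d ∧ RevPart α I d}

/-- Incomparable pairs `(a,b)` with `a ∈ A` and `b ∈ B`. -/
def IncPairs (A B : Set α) : Set (α × α) := {p | p.1 ∈ A ∧ p.2 ∈ B ∧ IncompP α p.1 p.2}

noncomputable def dimAB (A B : Set α) : ℕ := revDim α (IncPairs α A B)

/-- The minimal elements of `α`. -/
def minimalSet : Set α := {x | ∀ y : α, y ≤ x → y = x}

/-- The maximal elements of `α`. -/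
def maximalSet : Set α := {x | ∀ y : α, x ≤ y → y = x}

end Defs

open Fin.NatCast Fin.CommRing

namespace SAC

variable {α : Type*} [PartialOrder α] (I : Set (α × α))

/-- Base relation: original order plus reversed pairs. -/
def Base (a b : α) : Prop := a ≤ b ∨ (b, a) ∈ I

/-- `Good a b l` : a walk from `a` to `b` alternating `≤`-moves with
reversed pairs from `l` (all in `I`). -/
def Good : α → α → List (α × α) → Prop
  | a, b, [] => a ≤ b
  | a, b, p :: l => p ∈ I ∧ a ≤ p.2 ∧ Good p.1 b l

variable {I}

theorem Good.mono {a a' b : α} {l} (h : a ≤ a') (hg : Good I a' b l) : Good I a b l := by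
  cases l with
  | nil => exact le_trans h hg
  | cons p l => exact ⟨hg.1, le_trans h hg.2.1, hg.2.2⟩

theorem Good.append {a b c : α} {l₁ l₂} (h₁ : Good I a b l₁) (h₂ : Good I b c l₂) :
    Good I a c (l₁ ++ l₂) := by
  induction l₁ generalizing a with
  | nil => exact Good.mono h₁ h₂
  | cons p l ih => exact ⟨h₁.1, h₁.2.1, ih h₁.2.2⟩

theorem good_of_rtg {a b : α} (h : Relation.ReflTransGen (Base I) a b) :
    ∃ l, Good I a b l := by
  induction h using Relation.ReflTransGen.head_induction_on with
  | refl => exact ⟨[], le_refl _⟩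
  | head hbc _ ih =>
    obtain ⟨l, hl⟩ := ih
    rcases hbc with hle | hmem
    · exact ⟨l, Good.mono hle hl⟩
    · exact ⟨_ :: l, hmem, le_refl _, hl⟩

theorem Good.mem {a b : α} {l} (h : Good I a b l) : ∀ p ∈ l, p ∈ I := by
  induction l generalizing a with
  | nil => simp
  | cons p l ih =>
    intro q hq
    rcases List.mem_cons.mp hq with rfl | hq
    · exact h.1
    · exact ih h.2.2 q hq

theorem Good.chain {a b : α} {l} (h : Good I a b l) :
    ∀ i (hi : i + 1 < l.length), (l[i]'(by omega)).1 ≤ (l[i+1]'hi).2 := by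
  induction l generalizing a with
  | nil => intro i hi; simp at hi
  | cons p l ih =>
    intro i hi
    cases i with
    | zero =>
      cases l with
      | nil => simp at hi
      | cons q l' => simpa using h.2.2.2.1
    | succ n =>
      simpa using ih h.2.2 n (by simpa using hi)

theorem Good.last {b : α} : ∀ {l} {a : α}, Good I a b l → (hl : 0 < l.length) →
    (l[l.length - 1]'(by omega)).1 ≤ b := by
  intro l
  induction l with
  | nil => intro a _ hl; simp at hl
  | cons p l ih =>
    intro a h _
    cases l with
    | nil => exact h.2.2
    | cons q l' =>
      have := ih h.2.2 (by simp)
      simpa using this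

variable (I) in
/-- An alternating cycle with `n+1` pairs. -/
def Cyc (n : ℕ) (x y : Fin (n+1) → α) : Prop :=
  (∀ i, (x i, y i) ∈ I) ∧ ∀ i, x i ≤ y (i + 1)

theorem cyc_of_good {a : α} {l} (h : Good I a a l) (hl : l ≠ []) :
    ∃ (n : ℕ) (x y : Fin (n+1) → α), Cyc I n x y := by
  obtain ⟨n, hn⟩ : ∃ n, l.length = n + 1 :=
    Nat.exists_eq_succ_of_ne_zero (Nat.pos_iff_ne_zero.mp (List.length_pos_iff.mpr hl))
  refine ⟨n, fun i => (l[i.val]'(by omega)).1, fun i => (l[i.val]'(by omega)).2, ?_, ?_⟩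
  · intro i
    exact h.mem _ (List.getElem_mem _)
  · intro i
    rcases lt_or_eq_of_le (Nat.lt_succ_iff.mp i.isLt) with hlt | heq
    · have hval : ((i + 1 : Fin (n+1)) : ℕ) = i.val + 1 := by
        simp [Fin.val_add_one_of_lt, Fin.lt_iff_val_lt_val, Fin.val_last, hlt]
      have := h.chain i.val (by omega)
      simpa [hval] using this
    · have hval : ((i + 1 : Fin (n+1)) : ℕ) = 0 := by
        have : i = Fin.last n := by ext; simpa using heq
        simp [this]
      have h1 : (l[i.val]'(by omega)).1 ≤ a := by
        have := h.last (by omega)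
        simpa [hn, heq] using this
      have h2 : a ≤ (l[0]'(by omega)).2 := by
        cases l with
        | nil => exact absurd rfl hl
        | cons p l' => simpa using h.2.1
      simp only [hval]
      exact le_trans h1 h2


theorem shortcut {n : ℕ} {x y : Fin (n+1) → α} (hc : Cyc I n x y)
    {i j : Fin (n+1)} (hxy : x i ≤ y j) :
    ∃ (x' y' : Fin ((i - j).val + 1) → α), Cyc I (i - j).val x' y' := by
  refine ⟨fun t => x (j + (t.val : Fin (n+1))), fun t => y (j + (t.val : Fin (n+1))),
    fun t => hc.1 _, ?_⟩
  intro t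
  rcases lt_or_eq_of_le (Nat.lt_succ_iff.mp t.isLt) with hlt | heq
  · have hval : ((t + 1 : Fin ((i-j).val + 1)) : ℕ) = t.val + 1 := by
      simp [Fin.val_add_one_of_lt, Fin.lt_iff_val_lt_val, Fin.val_last, hlt]
    have hcast : ((t.val + 1 : ℕ) : Fin (n+1)) = (t.val : Fin (n+1)) + 1 := by
      push_cast; ring
    simp only [hval, hcast, ← add_assoc]
    exact hc.2 _
  · have hval : ((t + 1 : Fin ((i-j).val + 1)) : ℕ) = 0 := by
      have ht : t = Fin.last _ := by ext; simpa using heq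
      simp [ht]
    have h1 : j + (((i - j).val : ℕ) : Fin (n+1)) = i := by
      rw [Fin.cast_val_eq_self]; ring
    simp only [hval, heq, h1, Nat.cast_zero, add_zero]
    exact hxy

theorem strict_of_cyc (hI : ∀ p ∈ I, IncompP α p.1 p.2)
    (h : ∃ (n : ℕ) (x y : Fin (n+1) → α), Cyc I n x y) :
    ∃ (k : ℕ) (x y : Fin (k + 2) → α),
      (∀ i, (x i, y i) ∈ I) ∧ (∀ i j, x i ≤ y j ↔ j = i + 1) := by
  classical
  have hspec := Nat.find_spec h
  obtain ⟨N, hN⟩ : ∃ N, Nat.find h = N := ⟨_, rfl⟩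
  rw [hN] at hspec
  have hmin : ∀ m, m < N → ¬ ∃ x y : Fin (m+1) → α, Cyc I m x y := by
    rw [← hN]; exact fun m hm => Nat.find_min h hm
  obtain ⟨x, y, hc⟩ := hspec
  have hstrict : ∀ i j, x i ≤ y j → j = i + 1 := by
    intro i j hxy
    by_contra hne
    have hd : (i - j).val < N := by
      rcases Nat.lt_succ_iff_lt_or_eq.mp (i - j).isLt with h' | h'
      · exact h'
      · exfalso
        apply hne
        have hij : ((N : ℕ) : Fin (N+1)) = i - j := by
          have := Fin.cast_val_eq_self (i - j); rwa [h'] at this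
        have hzero : ((N + 1 : ℕ) : Fin (N+1)) = 0 := by simp
        have hneg : i - j = -1 := by
          rw [← hij]
          have : ((N : ℕ) : Fin (N+1)) + 1 = 0 := by push_cast at hzero ⊢; linear_combination hzero
          linear_combination this
        linear_combination -hneg
    exact hmin _ hd ⟨_, _, (shortcut hc hxy).choose_spec.choose_spec⟩
  have hN0 : N ≠ 0 := by
    intro h0
    haveI : Subsingleton (Fin (N+1)) := by rw [h0]; exact Fin.subsingleton_one
    have hstep := hc.2 0
    rw [Subsingleton.elim ((0 : Fin (N+1)) + 1) 0] at hstep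
    exact (hI _ (hc.1 0)).1 hstep
  obtain ⟨k, hk⟩ := Nat.exists_eq_succ_of_ne_zero hN0
  subst hk
  exact ⟨k, x, y, hc.1, fun i j => ⟨hstrict i j, by rintro rfl; exact hc.2 i⟩⟩

end SAC

/-- a nonempty set of incomparable pairs is reversible iff it contains
no strict alternating cycle (a cycle has `k + 2 ≥ 2` pairs, indexed by `Fin (k+2)`). -/
theorem stmt2 {α : Type*} [Fintype α] [PartialOrder α]
    (I : Set (α × α)) (hne : I.Nonempty) (hI : ∀ p ∈ I, IncompP α p.1 p.2) :
    ReversibleSet α I ↔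
      ¬ ∃ (k : ℕ) (x y : Fin (k + 2) → α),
          (∀ i, (x i, y i) ∈ I) ∧ (∀ i j, x i ≤ y j ↔ j = i + 1) := by
  classical
  constructor
  · rintro ⟨L, hext, hrev⟩ ⟨k, x, y, hmem, hstr⟩
    have step : ∀ i : Fin (k+2), L.lt (y i) (y (i+1)) := by
      intro i
      exact @lt_of_lt_of_le α L.toPreorder _ _ _ (hrev _ (hmem i))
        (hext _ _ ((hstr i (i+1)).mpr rfl))
    have main : ∀ n : ℕ, L.lt (y 0) (y ((n+1 : ℕ) : Fin (k+2))) := by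
      intro n
      induction n with
      | zero => simpa using step 0
      | succ m ih =>
        have h2 := step ((m+1 : ℕ) : Fin (k+2))
        have hcast : ((m+1 : ℕ) : Fin (k+2)) + 1 = ((m+1+1 : ℕ) : Fin (k+2)) := by
          push_cast; ring
        rw [hcast] at h2
        exact @lt_trans α L.toPreorder _ _ _ ih h2
    have hfin := main (k+1)
    rw [show ((k+1+1 : ℕ) : Fin (k+2)) = 0 from Fin.natCast_self _] at hfin
    exact @lt_irrefl α L.toPreorder _ hfin
  · intro hnc
    have hnocyc : ∀ (n : ℕ) (x y : Fin (n+1) → α), ¬ SAC.Cyc I n x y := by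
      intro n x y hcyc
      exact hnc (SAC.strict_of_cyc hI ⟨n, x, y, hcyc⟩)
    have hanti : ∀ a b : α, Relation.ReflTransGen (SAC.Base I) a b →
        Relation.ReflTransGen (SAC.Base I) b a → a = b := by
      intro a b hab hba
      obtain ⟨l₁, h₁⟩ := SAC.good_of_rtg hab
      obtain ⟨l₂, h₂⟩ := SAC.good_of_rtg hba
      rcases eq_or_ne (l₁ ++ l₂) [] with hnil | hnn
      · rw [List.append_eq_nil_iff] at hnil
        obtain ⟨rfl, rfl⟩ := hnil
        exact le_antisymm h₁ h₂
      · exfalso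
        obtain ⟨n, x, y, hcyc⟩ := SAC.cyc_of_good (SAC.Good.append h₁ h₂) hnn
        exact hnocyc n x y hcyc
    haveI : IsPartialOrder α (Relation.ReflTransGen (SAC.Base I)) :=
      { refl := fun _ => Relation.ReflTransGen.refl,
        trans := fun _ _ _ => Relation.ReflTransGen.trans,
        antisymm := hanti }
    obtain ⟨s, hs, hRs⟩ := extend_partialOrder (Relation.ReflTransGen (SAC.Base I))
    haveI := hs
    have hrefl : ∀ a, s a a := fun a => refl_of s a
    have htrans : ∀ a b c : α, s a b → s b c → s a c := fun _ _ _ h1 h2 => trans_of s h1 h2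
    have hanti' : ∀ a b : α, s a b → s b a → a = b := fun _ _ h1 h2 => antisymm h1 h2
    have htot : ∀ a b : α, s a b ∨ s b a := fun a b => total_of s a b
    refine ⟨{ le := s, lt := fun a b => s a b ∧ ¬ s b a,
              le_refl := hrefl, le_trans := htrans,
              lt_iff_le_not_ge := fun _ _ => Iff.rfl,
              le_antisymm := hanti', le_total := htot,
              toDecidableLE := fun _ _ => Classical.dec _ }, ?_, ?_⟩
    · intro u v huv
      exact hRs u v (Relation.ReflTransGen.single (Or.inl huv))
    · intro p hp
      have h1 : s p.2 p.1 := hRs _ _ (Relation.ReflTransGen.single (Or.inr hp))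
      refine ⟨h1, fun h2 => ?_⟩
      have hpq : p.1 = p.2 := hanti' _ _ h2 h1
      exact (hI p hp).1 (hpq ▸ le_refl p.1)
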